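/- arXiv:1806.05489 — 7 statements merged into one kernel-verified Lean document; each statement's English description precedes it below -/
import Mathlib

section
/- Let w be a σ-special surmultiplicative v-value function on an F-algebra A with involution σ. Then the associated graded ring gr_w(A) = ⊕_γ A_{≥γ}/A_{>γ} is semisimple, i.e., it contains no nonzero homogeneous two-sided nilpotent ideal. -/
/-- Let `w` be a `σ`-special surmultiplicative `v`-value function on an
`F`-algebra `A` with involution `σ`.  Then the associated graded ring
`gr_w(A) = ⊕_γ A_{≥γ}/A_{>γ}` is semisimple, i.e. it contains no nonzero homogeneous two-sided
nilpotent ideal.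

A homogeneous two-sided ideal of `gr_w(A)` is encoded by its components: a family
`I : Γ → AddSubgroup A` with `A_{>γ} ≤ I γ ≤ A_{≥γ}` (so that `I γ / A_{>γ}` is the degree-`γ`
component), closed under left and right multiplication by homogeneous elements.  The ideal is
nilpotent if some power vanishes: products of `m` homogeneous members lie in `A_{> sum of degrees}`.
The ideal is zero iff `I γ = A_{>γ}` for all `γ`. -/
theorem stmt_1
    {F A : Type*} [Field F] [Ring A] [Algebra F A]
    {Γ : Type*} [AddCommGroup Γ] [LinearOrder Γ] [IsOrderedAddMonoid Γ]
    (σ : A → A)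
    (hσadd : ∀ x y, σ (x + y) = σ x + σ y)
    (hσmul : ∀ x y, σ (x * y) = σ y * σ x)
    (hσinv : ∀ x, σ (σ x) = x)
    (hσlin : ∀ (r : F) (x : A), σ (r • x) = r • σ x)
    (v : F → WithTop Γ)
    (hv0 : ∀ x, v x = ⊤ ↔ x = 0)
    (hvmul : ∀ x y, v (x * y) = v x + v y)
    (hvadd : ∀ x y, min (v x) (v y) ≤ v (x + y))
    (w : A → WithTop Γ)
    (hw0 : ∀ x, w x = ⊤ ↔ x = 0)
    (hwadd : ∀ x y, min (w x) (w y) ≤ w (x + y))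
    (hwsmul : ∀ (r : F) (x : A), w (r • x) = v r + w x)
    (hwone : w 1 = 0)
    (hwmul : ∀ x y, w x + w y ≤ w (x * y))
    (hwspec : ∀ x, w (σ x * x) = w x + w x)
    -- `I` encodes a homogeneous two-sided ideal of `gr_w(A)`:
    (I : Γ → AddSubgroup A)
    (hIge : ∀ γ : Γ, ∀ x ∈ I γ, (↑γ : WithTop Γ) ≤ w x)
    (hIgt : ∀ γ : Γ, ∀ x : A, (↑γ : WithTop Γ) < w x → x ∈ I γ)
    (hIl : ∀ (α β : Γ) (x y : A), (α : WithTop Γ) ≤ w x → y ∈ I β → x * y ∈ I (α + β))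
    (hIr : ∀ (α β : Γ) (x y : A), (α : WithTop Γ) ≤ w x → y ∈ I β → y * x ∈ I (β + α))
    -- `I` is nilpotent:
    (hnil : ∃ m : ℕ, 0 < m ∧ ∀ (γ : Fin m → Γ) (y : Fin m → A),
        (∀ i, y i ∈ I (γ i)) → ((∑ i, γ i : Γ) : WithTop Γ) < w (List.ofFn y).prod) :
    -- then `I` is the zero ideal:
    ∀ γ : Γ, ∀ x ∈ I γ, (↑γ : WithTop Γ) < w x := by

  intro γ x hx
  by_contra hlt
  have hwx : w x = (γ : WithTop Γ) := le_antisymm (not_lt.mp hlt) (hIge γ x hx)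
  have hσ0 : σ (0 : A) = 0 := by
    have h := hσlin (0 : F) (0 : A)
    simpa using h
  have hσxne : σ x ≠ 0 := by
    intro h
    have hx0 : x = 0 := by rw [← hσinv x, h, hσ0]
    rw [hx0, (hw0 0).mpr rfl] at hwx
    exact (WithTop.coe_ne_top hwx.symm)
  have hwσxne : w (σ x) ≠ ⊤ := fun h => hσxne ((hw0 (σ x)).mp h)
  have hσge : (γ : WithTop Γ) ≤ w (σ x) := by
    have h1 := hwspec (σ x)
    rw [hσinv] at h1
    have h2 := hwmul x (σ x)
    rw [h1, hwx] at h2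
    exact (WithTop.add_le_add_iff_right hwσxne).mp h2
  set y := σ x * x with hy
  have hwy : w y = ((γ + γ : Γ) : WithTop Γ) := by
    rw [hy, hwspec, hwx, WithTop.coe_add]
  have hyI : y ∈ I (γ + γ) := hIl γ γ (σ x) x hσge hx
  set δ := γ + γ with hδ
  have hσ1 : σ (1 : A) = 1 := by
    have h1 : σ (σ 1 * 1) = σ 1 * σ (σ 1) := hσmul (σ 1) 1
    rw [mul_one, hσinv, mul_one] at h1
    exact h1.symm
  have hσy : σ y = y := by rw [hy, hσmul, hσinv]
  have hσpow : ∀ n : ℕ, σ (y ^ n) = y ^ n := by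
    intro n
    induction n with
    | zero => simpa using hσ1
    | succ n ih =>
        rw [pow_succ, hσmul, ih, hσy]
        rw [← pow_succ', pow_succ]
  have hlow : ∀ n : ℕ, ((n • δ : Γ) : WithTop Γ) ≤ w (y ^ n) := by
    intro n
    induction n with
    | zero => simp [hwone]
    | succ n ih =>
        rw [pow_succ, succ_nsmul, WithTop.coe_add]
        calc ((n • δ : Γ) : WithTop Γ) + (δ : WithTop Γ)
            ≤ w (y ^ n) + w y := add_le_add ih (le_of_eq hwy.symm)
          _ ≤ w (y ^ n * y) := hwmul _ _
  have hpow2 : ∀ k : ℕ, w (y ^ (2 ^ k)) = (((2 ^ k : ℕ) • δ : Γ) : WithTop Γ) := by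
    intro k
    induction k with
    | zero => simpa using hwy
    | succ k ih =>
        have h2 : (2 : ℕ) ^ (k + 1) = 2 ^ k + 2 ^ k := by ring
        rw [h2, pow_add, add_nsmul, WithTop.coe_add, ← ih]
        have := hwspec (y ^ (2 ^ k))
        rw [hσpow] at this
        exact this
  have hupper : ∀ n : ℕ, w (y ^ n) ≤ ((n • δ : Γ) : WithTop Γ) := by
    intro n
    have hn : n ≤ 2 ^ n := Nat.le_of_lt (Nat.lt_two_pow_self (n := n))
    have hsplit : (2 : ℕ) ^ n = n + (2 ^ n - n) := by omega
    have h1 := hpow2 n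
    rw [hsplit, pow_add] at h1
    have h2 : w (y ^ n) + w (y ^ (2 ^ n - n)) ≤ w (y ^ n * y ^ (2 ^ n - n)) := hwmul _ _
    rw [h1] at h2
    have h3 : w (y ^ n) + (((2 ^ n - n) • δ : Γ) : WithTop Γ)
        ≤ ((n • δ : Γ) : WithTop Γ) + (((2 ^ n - n) • δ : Γ) : WithTop Γ) := by
      calc w (y ^ n) + (((2 ^ n - n) • δ : Γ) : WithTop Γ)
          ≤ w (y ^ n) + w (y ^ (2 ^ n - n)) := add_le_add le_rfl (hlow _)
        _ ≤ (((n + (2 ^ n - n)) • δ : Γ) : WithTop Γ) := h2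
        _ = _ := by rw [add_nsmul, WithTop.coe_add]
    exact (WithTop.add_le_add_iff_right (WithTop.coe_ne_top)).mp h3
  have hexact : ∀ n : ℕ, w (y ^ n) = ((n • δ : Γ) : WithTop Γ) :=
    fun n => le_antisymm (hupper n) (hlow n)
  obtain ⟨m, hm0, H⟩ := hnil
  have hHy := H (fun _ => δ) (fun _ => y) (fun _ => hyI)
  have hprod : (List.ofFn (fun _ : Fin m => y)).prod = y ^ m := by
    rw [List.ofFn_const, List.prod_replicate]
  have hsum : (∑ _i : Fin m, δ) = m • δ := by
    simp [Finset.sum_const]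
  rw [hprod, hsum, hexact] at hHy
  exact lt_irrefl _ hHy
end

section
/- Let A be an F-algebra with F-linear involution σ, let P be an ordering on F, and let 𝒫 be a prepositive cone on (A,σ) over P. Let L be any subfield of Z(A) ∩ Sym(A,σ) containing F. Then P extends to an ordering on L. -/
/-- Let `A` be an `F`-algebra with `F`-linear involution `σ`, `P` an ordering on
`F`, and `Pc` a prepositive cone on `(A,σ)` over `P`.  Let `L` be any subfield of
`Z(A) ∩ Sym(A,σ)` containing `F`.  Then `P` extends to an ordering on `L`. -/
theorem stmt_2
    {F A : Type*} [Field F] [Ring A] [Algebra F A]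
    (σ : A → A)
    (hσadd : ∀ x y, σ (x + y) = σ x + σ y)
    (hσmul : ∀ x y, σ (x * y) = σ y * σ x)
    (hσinv : ∀ x, σ (σ x) = x)
    (hσlin : ∀ (r : F) (x : A), σ (r • x) = r • σ x)
    -- `P` is an ordering on `F` (containing `0` by convention):
    (P : Set F)
    (hP0 : (0 : F) ∈ P)
    (hPadd : ∀ a ∈ P, ∀ b ∈ P, a + b ∈ P)
    (hPmul : ∀ a ∈ P, ∀ b ∈ P, a * b ∈ P)
    (hPtot : ∀ a : F, a ∈ P ∨ -a ∈ P)
    (hPprop : ∀ a : F, a ∈ P → -a ∈ P → a = 0)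
    -- `Pc` is a prepositive cone on `(A,σ)` over `P`:
    (Pc : Set A)
    (hPcsym : ∀ a ∈ Pc, σ a = a)
    (hPc0 : (0 : A) ∈ Pc)
    (hPcadd : ∀ a ∈ Pc, ∀ b ∈ Pc, a + b ∈ Pc)
    (hPcconj : ∀ (x : A), ∀ a ∈ Pc, σ x * a * x ∈ Pc)
    (hPcF : {u : F | ∀ a ∈ Pc, u • a ∈ Pc} = P)
    (hPcprop : ∀ a ∈ Pc, -a ∈ Pc → a = 0)
    -- `L` is a subfield of `Z(A) ∩ Sym(A,σ)` containing `F`: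
    (L : Subring A)
    (hLcentral : ∀ x ∈ L, ∀ y : A, x * y = y * x)
    (hLsym : ∀ x ∈ L, σ x = x)
    (hLF : ∀ r : F, algebraMap F A r ∈ L)
    (hLfield : ∀ x ∈ L, x ≠ 0 → ∃ y ∈ L, x * y = 1) :
    -- then `P` extends to an ordering `Q` on `L`:
    ∃ Q : Set A, Q ⊆ (L : Set A) ∧
      (∀ a ∈ Q, ∀ b ∈ Q, a + b ∈ Q) ∧
      (∀ a ∈ Q, ∀ b ∈ Q, a * b ∈ Q) ∧
      (∀ x ∈ L, x ∈ Q ∨ -x ∈ Q) ∧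
      (∀ x, x ∈ Q → -x ∈ Q → x = 0) ∧
      (∀ r : F, algebraMap F A r ∈ Q ↔ r ∈ P) := by
  classical
  -- the base preordering on `L`
  set Q₀ : Set A := {x | x ∈ L ∧ ∀ a ∈ Pc, x * a ∈ Pc} with hQ₀def
  -- `Pc` contains a nonzero element
  have hPcne : ∃ a ∈ Pc, a ≠ 0 := by
    by_contra h
    push_neg at h
    have hall : ∀ u : F, u ∈ P := by
      intro u
      have : u ∈ {u : F | ∀ a ∈ Pc, u • a ∈ Pc} := by
        intro a ha
        have := h a ha
        subst this
        simpa using hPc0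
      rwa [hPcF] at this
    exact one_ne_zero (hPprop 1 (hall 1) (hall (-1)))
  obtain ⟨a0, ha0Pc, ha0ne⟩ := hPcne
  have : Nontrivial A := nontrivial_of_ne a0 0 ha0ne
  -- squares of `L` lie in `Q₀`
  have hQ₀sq : ∀ x ∈ L, x * x ∈ Q₀ := by
    intro x hx
    refine ⟨L.mul_mem hx hx, fun a ha => ?_⟩
    have h1 : σ x * a * x ∈ Pc := hPcconj x a ha
    have h2 : σ x * a * x = x * x * a := by
      rw [hLsym x hx, mul_assoc, ← hLcentral x hx a, ← mul_assoc]
    rwa [h2] at h1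
  have hQ₀one : (1 : A) ∈ Q₀ := by simpa using hQ₀sq 1 L.one_mem
  have hQ₀zero : (0 : A) ∈ Q₀ := by simpa using hQ₀sq 0 L.zero_mem
  -- `P` embeds in `Q₀`
  have hQ₀P : ∀ r ∈ P, algebraMap F A r ∈ Q₀ := by
    intro r hr
    refine ⟨hLF r, fun a ha => ?_⟩
    have hr' : r ∈ {u : F | ∀ a ∈ Pc, u • a ∈ Pc} := by rw [hPcF]; exact hr
    have := hr' a ha
    rwa [Algebra.smul_def] at this
  -- `-1 ∉ Q₀`
  have hQ₀neg1 : (-1 : A) ∉ Q₀ := by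
    rintro ⟨-, h⟩
    have := h a0 ha0Pc
    rw [neg_one_mul] at this
    exact ha0ne (hPcprop a0 ha0Pc this)
  -- key ring identity for a central element `x`
  have key : ∀ (x a b c d : A), (∀ y, x * y = y * x) →
      (a + x * b) * (c + x * d) = (a * c + (x * x) * (b * d)) + x * (a * d + b * c) := by
    intro x a b c d hx
    have h1 : a * (x * d) = x * (a * d) := by rw [← mul_assoc, ← hx a, mul_assoc]
    have h3 : (x * b) * (x * d) = (x * x) * (b * d) := by
      rw [mul_assoc x b, ← mul_assoc b x, ← hx b, mul_assoc x b, ← mul_assoc,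
        ← mul_assoc, mul_assoc (x * x)]
    rw [add_mul, mul_add, mul_add, h1, h3, mul_assoc x b c, mul_add x (a * d) (b * c)]
    abel
  -- the family of admissible preorderings
  set S : Set (Set A) :=
    {Q | Q₀ ⊆ Q ∧ Q ⊆ (L : Set A) ∧ (∀ a ∈ Q, ∀ b ∈ Q, a + b ∈ Q) ∧
      (∀ a ∈ Q, ∀ b ∈ Q, a * b ∈ Q) ∧ (-1 : A) ∉ Q} with hSdef
  have hQ₀S : Q₀ ∈ S := by
    refine ⟨le_refl _, fun x hx => hx.1, ?_, ?_, hQ₀neg1⟩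
    · rintro a ⟨haL, ha⟩ b ⟨hbL, hb⟩
      refine ⟨L.add_mem haL hbL, fun c hc => ?_⟩
      rw [add_mul]
      exact hPcadd _ (ha c hc) _ (hb c hc)
    · rintro a ⟨haL, ha⟩ b ⟨hbL, hb⟩
      refine ⟨L.mul_mem haL hbL, fun c hc => ?_⟩
      rw [mul_assoc]
      exact ha _ (hb c hc)
  -- Zorn's lemma
  obtain ⟨Q, hQ₀Q, hQmax⟩ := zorn_subset_nonempty S (fun c hcS hchain hcne => by
    refine ⟨⋃₀ c, ⟨?_, ?_, ?_, ?_, ?_⟩, fun s hs => Set.subset_sUnion_of_mem hs⟩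
    · obtain ⟨t, ht⟩ := hcne
      exact (hcS ht).1.trans (Set.subset_sUnion_of_mem ht)
    · rintro x ⟨t, ht, hx⟩
      exact (hcS ht).2.1 hx
    · rintro a ⟨t, ht, ha⟩ b ⟨u, hu, hb⟩
      rcases hchain.total ht hu with h | h
      · exact Set.subset_sUnion_of_mem hu ((hcS hu).2.2.1 a (h ha) b hb)
      · exact Set.subset_sUnion_of_mem ht ((hcS ht).2.2.1 a ha b (h hb))
    · rintro a ⟨t, ht, ha⟩ b ⟨u, hu, hb⟩
      rcases hchain.total ht hu with h | h
      · exact Set.subset_sUnion_of_mem hu ((hcS hu).2.2.2.1 a (h ha) b hb)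
      · exact Set.subset_sUnion_of_mem ht ((hcS ht).2.2.2.1 a ha b (h hb))
    · rintro ⟨t, ht, hneg⟩
      exact (hcS ht).2.2.2.2 hneg) Q₀ hQ₀S
  obtain ⟨hQS, hQmax'⟩ := hQmax
  obtain ⟨hQ₀Q', hQL, hQadd, hQmul, hQneg1⟩ := hQS
  have hQone : (1 : A) ∈ Q := hQ₀Q' hQ₀one
  have hQzero : (0 : A) ∈ Q := hQ₀Q' hQ₀zero
  have hQsq : ∀ x ∈ L, x * x ∈ Q := fun x hx => hQ₀Q' (hQ₀sq x hx)
  -- totality on `L`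
  have htot : ∀ x ∈ L, x ∈ Q ∨ -x ∈ Q := by
    intro x hxL
    by_cases hxQ : x ∈ Q
    · exact Or.inl hxQ
    right
    have hxc : ∀ y, x * y = y * x := hLcentral x hxL
    set Q' : Set A := {z | ∃ a ∈ Q, ∃ b ∈ Q, z = a + x * b} with hQ'def
    have hQQ' : Q ⊆ Q' := fun a ha => ⟨a, ha, 0, hQzero, by simp⟩
    have hxQ' : x ∈ Q' := ⟨0, hQzero, 1, hQone, by simp⟩
    by_cases hneg : (-1 : A) ∈ Q'
    · -- extract `-x ∈ Q`
      obtain ⟨a, haQ, b, hbQ, hab⟩ := hneg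
      by_cases hb0 : b = 0
      · exfalso
        apply hQneg1
        rw [hb0, mul_zero, add_zero] at hab
        rwa [hab]
      obtain ⟨cinv, hcL, hbc⟩ := hLfield b (hQL hbQ) hb0
      have hxb : x * b = -1 - a := by
        rw [eq_sub_iff_add_eq, add_comm]
        exact hab.symm
      have h5 : -x = (1 + a) * cinv := by
        have hx1 : x = (x * b) * cinv := by rw [mul_assoc, hbc, mul_one]
        rw [hx1, hxb, ← neg_mul]
        congr 1
        abel
      have h6 : -x = ((1 + a) * b) * (cinv * cinv) := by
        rw [h5, mul_assoc (1 + a) b, ← mul_assoc b cinv cinv, hbc, one_mul]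
      rw [h6]
      exact hQmul _ (hQmul _ (hQadd 1 hQone a haQ) b hbQ) _ (hQsq cinv hcL)
    · exfalso
      have hQ'S : Q' ∈ S := by
        refine ⟨hQ₀Q'.trans hQQ', ?_, ?_, ?_, hneg⟩
        · rintro z ⟨a, haQ, b, hbQ, rfl⟩
          exact L.add_mem (hQL haQ) (L.mul_mem hxL (hQL hbQ))
        · rintro z ⟨a, haQ, b, hbQ, rfl⟩ w ⟨c, hcQ, d, hdQ, rfl⟩
          exact ⟨a + c, hQadd a haQ c hcQ, b + d, hQadd b hbQ d hdQ, by
            rw [mul_add x b d]; abel⟩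
        · rintro z ⟨a, haQ, b, hbQ, rfl⟩ w ⟨c, hcQ, d, hdQ, rfl⟩
          exact ⟨a * c + (x * x) * (b * d),
            hQadd _ (hQmul a haQ c hcQ) _ (hQmul _ (hQsq x hxL) _ (hQmul b hbQ d hdQ)),
            a * d + b * c, hQadd _ (hQmul a haQ d hdQ) _ (hQmul b hbQ c hcQ),
            key x a b c d hxc⟩
      exact hxQ (hQmax' hQ'S hQQ' hxQ')
  -- properness
  have hprop : ∀ z, z ∈ Q → -z ∈ Q → z = 0 := by
    intro z hz hnz
    by_contra hz0
    obtain ⟨c, hcL, hzc⟩ := hLfield z (hQL hz) hz0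
    apply hQneg1
    have h2a : (z * z) * (c * c) = z * ((z * c) * c) := by
      rw [mul_assoc z z (c * c), ← mul_assoc z c c]
    have h2 : (z * z) * (c * c) = 1 := by
      rw [h2a, hzc, one_mul, hzc]
    have h1 : (-1 : A) = (z * -z) * (c * c) := by
      rw [mul_neg, neg_mul, h2]
    rw [h1]
    exact hQmul _ (hQmul z hz _ hnz) _ (hQsq c hcL)
  -- the algebra map condition
  have hmap : ∀ r : F, algebraMap F A r ∈ Q ↔ r ∈ P := by
    intro r
    constructor
    · intro h
      rcases hPtot r with hr | hr
      · exact hr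
      · have h2 : -(algebraMap F A r) ∈ Q := by
          have := hQ₀Q' (hQ₀P _ hr)
          rwa [map_neg] at this
        have h0 := hprop _ h h2
        have hr0 : r = 0 := (algebraMap F A).injective (by rw [h0, map_zero])
        rw [hr0]
        exact hP0
    · exact fun h => hQ₀Q' (hQ₀P r h)
  exact ⟨Q, hQL, hQadd, hQmul, htot, hprop, hmap⟩
end

section
/- Let (A,σ) = (A₁,σ₁) × ⋯ × (A_r,σ_r) × (B₁,τ₁) × ⋯ × (B_s,τ_s) be a finite-dimensional semisimple F-algebra with involution, where each A_i is simple with F-linear involution σ_i, and each B_j = C_j × C_j^op with the exchange involution τ_j. If 𝒫 is a prepositive cone on (A,σ) over P ∈ X_F, then 𝒫 = 𝒫₁ × ⋯ × 𝒫_r × {0} × ⋯ × {0}, where each 𝒫_i is either a prepositive cone on (A_i,σ_i) over P or {0}, and at least one 𝒫_i is nonzero. -/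
/-- A prepositive cone on an `F`-algebra `B` with `F`-linear involution `τ`, over the
ordering `P` of `F` (conditions (P1)–(P5)). -/
def IsPrepositiveCone {F B : Type*} [Field F] [Ring B] [Algebra F B]
    (τ : B → B) (P : Set F) (S : Set B) : Prop :=
  (∀ b ∈ S, τ b = b) ∧
  (0 : B) ∈ S ∧
  (∀ a ∈ S, ∀ b ∈ S, a + b ∈ S) ∧
  (∀ x : B, ∀ a ∈ S, τ x * a * x ∈ S) ∧
  {u : F | ∀ a ∈ S, u • a ∈ S} = P ∧
  (∀ a ∈ S, -a ∈ S → a = 0)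

/-- Let `(A,σ) = (A₁,σ₁) × ⋯ × (A_r,σ_r) × (B₁,τ₁) × ⋯ × (B_s,τ_s)` be a
finite-dimensional semisimple `F`-algebra with involution, where each `A i` is simple with
`F`-linear involution `σ i`, and each `B j = C j × (C j)ᵒᵖ` carries the exchange involution.
If `Pc` is a prepositive cone on `(A,σ)` over `P`, then `Pc` is the product of its components:
each component on a factor `A i` is either a prepositive cone over `P` or `{0}`, the components
on the exchange factors are `{0}`, and at least one component is nonzero. -/
theorem stmt_3
    {F : Type*} [Field F] {r s : ℕ}
    (A : Fin r → Type*) [∀ i, Ring (A i)] [∀ i, Algebra F (A i)]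
    [∀ i, FiniteDimensional F (A i)] [∀ i, IsSimpleRing (A i)]
    (σ : ∀ i, A i → A i)
    (hσadd : ∀ i, ∀ x y, σ i (x + y) = σ i x + σ i y)
    (hσmul : ∀ i, ∀ x y, σ i (x * y) = σ i y * σ i x)
    (hσinv : ∀ i, ∀ x, σ i (σ i x) = x)
    (hσlin : ∀ i, ∀ (c : F) (x : A i), σ i (c • x) = c • σ i x)
    (C : Fin s → Type*) [∀ j, Ring (C j)] [∀ j, Algebra F (C j)]
    [∀ j, FiniteDimensional F (C j)] [∀ j, IsSimpleRing (C j)]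
    -- `P` is an ordering on `F`:
    (P : Set F)
    (hP0 : (0 : F) ∈ P)
    (hPadd : ∀ a ∈ P, ∀ b ∈ P, a + b ∈ P)
    (hPmul : ∀ a ∈ P, ∀ b ∈ P, a * b ∈ P)
    (hPtot : ∀ a : F, a ∈ P ∨ -a ∈ P)
    (hPprop : ∀ a : F, a ∈ P → -a ∈ P → a = 0)
    -- the involution on the product algebra: `σ` on the `A i` and exchange on the `C j × (C j)ᵒᵖ`
    (Pc : Set ((∀ i, A i) × ∀ j, C j × (C j)ᵐᵒᵖ))
    (hPc : IsPrepositiveCone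
      (fun a : (∀ i, A i) × ∀ j, C j × (C j)ᵐᵒᵖ => (fun i => σ i (a.1 i),
                 fun j => ((a.2 j).2.unop, MulOpposite.op (a.2 j).1)))
      P Pc) :
    (∀ a ∈ Pc, a.2 = 0) ∧
    (∀ a : (∀ i, A i) × ∀ j, C j × (C j)ᵐᵒᵖ,
        a ∈ Pc ↔ ((∀ i, a.1 i ∈ (fun b : (∀ i, A i) × ∀ j, C j × (C j)ᵐᵒᵖ => b.1 i) '' Pc)
          ∧ a.2 = 0)) ∧
    (∀ i, ((fun b : (∀ i, A i) × ∀ j, C j × (C j)ᵐᵒᵖ => b.1 i) '' Pc = {0}) ∨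
      IsPrepositiveCone (σ i) P
        ((fun b : (∀ i, A i) × ∀ j, C j × (C j)ᵐᵒᵖ => b.1 i) '' Pc)) ∧
    (∃ i, (fun b : (∀ i, A i) × ∀ j, C j × (C j)ᵐᵒᵖ => b.1 i) '' Pc ≠ {0}) := by
  classical
  obtain ⟨hsym, h0, hadd, hconj, hscal, hprop⟩ := hPc
  -- basic facts about the involutions
  have hσ0 : ∀ i, σ i (0 : A i) = 0 := by
    intro i
    have h := hσadd i 0 0
    rw [add_zero] at h
    exact left_eq_add.mp h
  have hσ1 : ∀ i, σ i (1 : A i) = 1 := by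
    intro i
    have h := hσmul i (σ i 1) 1
    rw [mul_one, hσinv, mul_one] at h
    exact h.symm
  -- closure of Pc under finite sums
  have hsumPc : ∀ (t : Finset (Fin r)) (f : Fin r → (∀ i, A i) × ∀ j, C j × (C j)ᵐᵒᵖ),
      (∀ i, f i ∈ Pc) → (∑ i ∈ t, f i) ∈ Pc := by
    intro t f hf
    induction t using Finset.induction_on with
    | empty => simpa using h0
    | insert _ _ hx ih => rw [Finset.sum_insert hx]; exact hadd _ (hf _) _ ih
  -- Part 1: the exchange components of elements of Pc vanish
  have part1 : ∀ a ∈ Pc, a.2 = 0 := by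
    intro a ha
    funext j
    obtain ⟨c, hc⟩ : ∃ c, a.2 j = (c, MulOpposite.op c) := by
      refine ⟨(a.2 j).1, ?_⟩
      have h2 : ((MulOpposite.unop (a.2 j).2, MulOpposite.op (a.2 j).1) :
          C j × (C j)ᵐᵒᵖ) = a.2 j := congrFun (congrArg Prod.snd (hsym a ha)) j
      have h3 : MulOpposite.op (a.2 j).1 = (a.2 j).2 := congrArg Prod.snd h2
      rw [h3]
    have key : ∀ q : C j,
        ((0, Pi.single j (q * c, MulOpposite.op (q * c))) :
          (∀ i, A i) × ∀ j, C j × (C j)ᵐᵒᵖ) ∈ Pc := by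
      intro q
      set x : (∀ i, A i) × ∀ j', C j' × (C j')ᵐᵒᵖ :=
        (0, Pi.single j (1, MulOpposite.op q)) with hxdef
      have h : ((fun i => σ i (x.1 i),
          fun j' => (((x.2 j').2).unop, MulOpposite.op ((x.2 j').1))) * a * x) ∈ Pc :=
        hconj x a ha
      have heq : ((fun i => σ i (x.1 i),
          fun j' => (((x.2 j').2).unop, MulOpposite.op ((x.2 j').1))) * a * x) =
          (0, Pi.single j (q * c, MulOpposite.op (q * c))) := by
        rw [hxdef]
        refine Prod.ext ?_ ?_
        · funext i
          simp [hσ0]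
        · funext j'
          by_cases hj : j' = j
          · subst hj
            simp only [Prod.snd_mul, Pi.mul_apply, Pi.single_eq_same, hc]
            refine Prod.ext ?_ ?_
            · simp
            · simp [← MulOpposite.op_mul, mul_assoc]
          · simp [Pi.single_eq_of_ne hj]
      rw [heq] at h
      exact h
    have h1 := key 1
    have h2 := key (-1)
    rw [one_mul] at h1
    have h2' : -((0, Pi.single j (c, MulOpposite.op c)) :
        (∀ i, A i) × ∀ j, C j × (C j)ᵐᵒᵖ) ∈ Pc := by
      have heq : ((0, Pi.single j ((-1 : C j) * c, MulOpposite.op ((-1 : C j) * c))) :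
          (∀ i, A i) × ∀ j, C j × (C j)ᵐᵒᵖ) =
          -(0, Pi.single j (c, MulOpposite.op c)) := by
        have hpair : ((-c, MulOpposite.op (-c)) : C j × (C j)ᵐᵒᵖ) =
            -(c, MulOpposite.op c) := by
          refine Prod.ext rfl ?_
          simp
        rw [neg_one_mul, hpair, Pi.single_neg]
        exact Prod.ext neg_zero.symm rfl
      rwa [heq] at h2
    have h0' := hprop _ h1 h2'
    have h5 := congrFun (congrArg Prod.snd h0') j
    simp only [Prod.snd_zero, Pi.zero_apply, Pi.single_eq_same] at h5
    have hc0 : c = 0 := (Prod.ext_iff.mp h5).1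
    rw [hc, hc0]
    exact Prod.ext rfl (by simp)
  -- conjugation by elements supported on one simple factor
  have hL2 : ∀ (i : Fin r) (z : A i) (b : (∀ i, A i) × ∀ j, C j × (C j)ᵐᵒᵖ), b ∈ Pc →
      ((Pi.single i (σ i z * b.1 i * z), 0) : (∀ i, A i) × ∀ j, C j × (C j)ᵐᵒᵖ) ∈ Pc := by
    intro i z b hb
    set x : (∀ i, A i) × ∀ j', C j' × (C j')ᵐᵒᵖ := (Pi.single i z, 0) with hxdef
    have h : ((fun i' => σ i' (x.1 i'),
        fun j' => (((x.2 j').2).unop, MulOpposite.op ((x.2 j').1))) * b * x) ∈ Pc :=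
      hconj x b hb
    have heq : ((fun i' => σ i' (x.1 i'),
        fun j' => (((x.2 j').2).unop, MulOpposite.op ((x.2 j').1))) * b * x) =
        (Pi.single i (σ i z * b.1 i * z), 0) := by
      rw [hxdef]
      refine Prod.ext ?_ ?_
      · funext i'
        by_cases hi : i' = i
        · subst hi
          simp
        · simp [Pi.single_eq_of_ne hi, hσ0]
      · funext j'
        simp
    rw [heq] at h
    exact h
  -- characterization of membership in the projections
  have hB3 : ∀ (i : Fin r) (x : A i),
      x ∈ (fun b : (∀ i, A i) × ∀ j, C j × (C j)ᵐᵒᵖ => b.1 i) '' Pc ↔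
        ((Pi.single i x, 0) : (∀ i, A i) × ∀ j, C j × (C j)ᵐᵒᵖ) ∈ Pc := by
    intro i x
    constructor
    · rintro ⟨b, hb, rfl⟩
      have h := hL2 i 1 b hb
      simpa [hσ1] using h
    · intro h
      exact ⟨_, h, by simp⟩
  -- Part 2
  have part2 : ∀ a : (∀ i, A i) × ∀ j, C j × (C j)ᵐᵒᵖ,
      a ∈ Pc ↔ ((∀ i, a.1 i ∈ (fun b : (∀ i, A i) × ∀ j, C j × (C j)ᵐᵒᵖ => b.1 i) '' Pc)
        ∧ a.2 = 0) := by
    intro a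
    constructor
    · intro ha
      exact ⟨fun i => ⟨a, ha, rfl⟩, part1 a ha⟩
    · rintro ⟨h1, h2⟩
      have hmem : ∀ i, ((Pi.single i (a.1 i), 0) :
          (∀ i, A i) × ∀ j, C j × (C j)ᵐᵒᵖ) ∈ Pc := fun i => (hB3 i _).mp (h1 i)
      have hs := hsumPc Finset.univ (fun i => (Pi.single i (a.1 i), 0)) hmem
      have heq : (∑ i, ((Pi.single i (a.1 i), 0) :
          (∀ i, A i) × ∀ j, C j × (C j)ᵐᵒᵖ)) = a := by
        refine Prod.ext ?_ ?_
        · rw [Prod.fst_sum]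
          exact Finset.univ_sum_single a.1
        · rw [Prod.snd_sum, h2]
          simp
      rwa [heq] at hs
  -- properness of the projections
  have hSproper : ∀ (i : Fin r) (x : A i),
      x ∈ (fun b : (∀ i, A i) × ∀ j, C j × (C j)ᵐᵒᵖ => b.1 i) '' Pc →
      -x ∈ (fun b : (∀ i, A i) × ∀ j, C j × (C j)ᵐᵒᵖ => b.1 i) '' Pc → x = 0 := by
    intro i x hx hnx
    have h1 := (hB3 i x).mp hx
    have h2 := (hB3 i (-x)).mp hnx
    have h2' : -((Pi.single i x, 0) : (∀ i, A i) × ∀ j, C j × (C j)ᵐᵒᵖ) ∈ Pc := by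
      have heq : ((Pi.single i (-x), 0) : (∀ i, A i) × ∀ j, C j × (C j)ᵐᵒᵖ) =
          -(Pi.single i x, 0) := by
        refine Prod.ext ?_ (by simp)
        simp [Pi.single_neg]
      rwa [heq] at h2
    have h3 := hprop _ h1 h2'
    have := congrFun (congrArg Prod.fst h3) i
    simpa using this
  -- scalars in P preserve the projections
  have hPS : ∀ u ∈ P, ∀ (i : Fin r) (x : A i),
      x ∈ (fun b : (∀ i, A i) × ∀ j, C j × (C j)ᵐᵒᵖ => b.1 i) '' Pc →
      u • x ∈ (fun b : (∀ i, A i) × ∀ j, C j × (C j)ᵐᵒᵖ => b.1 i) '' Pc := by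
    intro u hu i x hx
    have hu' : ∀ a ∈ Pc, u • a ∈ Pc := by
      have : u ∈ {u : F | ∀ a ∈ Pc, u • a ∈ Pc} := hscal.symm ▸ hu
      exact this
    have h1 := hu' _ ((hB3 i x).mp hx)
    rw [hB3]
    have heq : u • ((Pi.single i x, 0) : (∀ i, A i) × ∀ j, C j × (C j)ᵐᵒᵖ) =
        (Pi.single i (u • x), 0) := by
      refine Prod.ext ?_ (by simp)
      simp [Pi.single_smul]
    rwa [heq] at h1
  refine ⟨part1, part2, ?_, ?_⟩
  · -- Part 3
    intro i
    by_cases hS : (fun b : (∀ i, A i) × ∀ j, C j × (C j)ᵐᵒᵖ => b.1 i) '' Pc = {0}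
    · exact Or.inl hS
    · refine Or.inr ⟨?_, ?_, ?_, ?_, ?_, ?_⟩
      · -- symmetry
        rintro b ⟨a, ha, rfl⟩
        have h := congrFun (congrArg Prod.fst (hsym a ha)) i
        exact h
      · exact (hB3 i 0).mpr (by rw [Pi.single_zero]; exact h0)
      · -- additivity
        intro x hx y hy
        rw [hB3] at hx hy ⊢
        have h := hadd _ hx _ hy
        have heq : ((Pi.single i x, 0) : (∀ i, A i) × ∀ j, C j × (C j)ᵐᵒᵖ) +
            (Pi.single i y, 0) = (Pi.single i (x + y), 0) := by
          refine Prod.ext ?_ (by simp)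
          simp [Pi.single_add]
        rwa [heq] at h
      · -- conjugation
        intro z x hx
        rw [hB3] at hx ⊢
        have h := hL2 i z _ hx
        simpa using h
      · -- the scalar set is P
        ext u
        simp only [Set.mem_setOf_eq]
        constructor
        · intro hu
          by_contra hup
          have hnu : -u ∈ P := (hPtot u).resolve_left hup
          obtain ⟨x, hx, hxne⟩ : ∃ x ∈ (fun b : (∀ i, A i) × ∀ j, C j × (C j)ᵐᵒᵖ =>
              b.1 i) '' Pc, x ≠ 0 := by
            by_contra hcon
            push_neg at hcon
            apply hS
            apply Set.eq_singleton_iff_unique_mem.mpr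
            exact ⟨⟨0, h0, rfl⟩, fun y hy => hcon y hy⟩
          have h1 : u • x ∈ (fun b : (∀ i, A i) × ∀ j, C j × (C j)ᵐᵒᵖ => b.1 i) '' Pc :=
            hu x hx
          have h2 : (-u) • x ∈ (fun b : (∀ i, A i) × ∀ j, C j × (C j)ᵐᵒᵖ => b.1 i) '' Pc :=
            hPS (-u) hnu i x hx
          have h3 : -((-u) • x) ∈ (fun b : (∀ i, A i) × ∀ j, C j × (C j)ᵐᵒᵖ =>
              b.1 i) '' Pc := by
            rwa [neg_smul, neg_neg]
          have h4 := hSproper i _ h2 h3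
          rw [neg_smul, neg_eq_zero, smul_eq_zero] at h4
          rcases h4 with h4 | h4
          · exact hup (h4 ▸ hP0)
          · exact hxne h4
        · intro hu x hx
          exact hPS u hu i x hx
      · exact hSproper i
  · -- Part 4
    by_contra hno
    push_neg at hno
    have hPc0 : Pc = {0} := by
      ext a
      simp only [Set.mem_singleton_iff]
      constructor
      · intro ha
        obtain ⟨h1, h2⟩ := (part2 a).mp ha
        refine Prod.ext ?_ h2
        funext i
        have h := h1 i
        rw [hno i] at h
        exact h
      · rintro rfl
        exact h0
    have h1 : (1 : F) = 0 := by
      apply hPprop 1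
      · rw [← hscal]
        intro a ha
        rw [hPc0] at ha ⊢
        rw [Set.mem_singleton_iff] at ha ⊢
        rw [ha, smul_zero]
      · rw [← hscal]
        intro a ha
        rw [hPc0] at ha ⊢
        rw [Set.mem_singleton_iff] at ha ⊢
        rw [ha, smul_zero]
    exact one_ne_zero h1
end

section
/- Let A be an F-algebra with F-linear involution σ, 𝒫 a prepositive cone on (A,σ) over P ∈ X_F with 1 ∈ 𝒫, and k a subfield of F. Define R_{k,𝒫} := {a ∈ A : ∃ m ∈ k ∩ P, σ(a)a ≤_𝒫 m} and I_{k,𝒫} := {a ∈ A : ∀ ε ∈ k^× ∩ P, σ(a)a ≤_𝒫 ε}. Then R_{k,𝒫} is a subring of A and I_{k,𝒫} is a two-sided ideal of R_{k,𝒫}. -/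
/-- Let `A` be an `F`-algebra with `F`-linear involution `σ`, `Pc` a prepositive
cone on `(A,σ)` over `P` with `1 ∈ Pc`, and `k` a subfield of `F`.  With
`R = {a : ∃ m ∈ k ∩ P, σ(a)a ≤_Pc m}` and `I = {a : ∀ ε ∈ k^× ∩ P, σ(a)a ≤_Pc ε}`,
`R` is a subring of `A` and `I` is a two-sided ideal of `R`. -/
theorem stmt_5
    {F A : Type*} [Field F] [Ring A] [Algebra F A]
    (σ : A → A)
    (hσadd : ∀ x y, σ (x + y) = σ x + σ y)
    (hσmul : ∀ x y, σ (x * y) = σ y * σ x)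
    (hσinv : ∀ x, σ (σ x) = x)
    (hσlin : ∀ (r : F) (x : A), σ (r • x) = r • σ x)
    -- `P` is an ordering on `F`:
    (P : Set F)
    (hP0 : (0 : F) ∈ P)
    (hPadd : ∀ a ∈ P, ∀ b ∈ P, a + b ∈ P)
    (hPmul : ∀ a ∈ P, ∀ b ∈ P, a * b ∈ P)
    (hPtot : ∀ a : F, a ∈ P ∨ -a ∈ P)
    (hPprop : ∀ a : F, a ∈ P → -a ∈ P → a = 0)
    -- `Pc` is a prepositive cone on `(A,σ)` over `P` with `1 ∈ Pc`:
    (Pc : Set A)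
    (hPcsym : ∀ a ∈ Pc, σ a = a)
    (hPc0 : (0 : A) ∈ Pc)
    (hPcadd : ∀ a ∈ Pc, ∀ b ∈ Pc, a + b ∈ Pc)
    (hPcconj : ∀ (x : A), ∀ a ∈ Pc, σ x * a * x ∈ Pc)
    (hPcF : {u : F | ∀ a ∈ Pc, u • a ∈ Pc} = P)
    (hPcprop : ∀ a ∈ Pc, -a ∈ Pc → a = 0)
    (hone : (1 : A) ∈ Pc)
    -- `k` is a subfield of `F`:
    (k : Subfield F)
    -- the ring `R_{k,Pc}` and the set `I_{k,Pc}`: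
    (R I : Set A)
    (hR : R = {a : A | ∃ m : F, m ∈ k ∧ m ∈ P ∧ algebraMap F A m - σ a * a ∈ Pc})
    (hI : I = {a : A | ∀ ε : F, ε ∈ k → ε ∈ P → ε ≠ 0 →
      algebraMap F A ε - σ a * a ∈ Pc}) :
    -- `R` is a subring of `A`:
    ((1 : A) ∈ R ∧ (∀ a ∈ R, ∀ b ∈ R, a + b ∈ R) ∧ (∀ a ∈ R, -a ∈ R) ∧
      (∀ a ∈ R, ∀ b ∈ R, a * b ∈ R)) ∧
    -- and `I` is a two-sided ideal of `R`:
    (I ⊆ R ∧ (0 : A) ∈ I ∧ (∀ a ∈ I, ∀ b ∈ I, a + b ∈ I) ∧ (∀ a ∈ I, -a ∈ I) ∧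
      (∀ a ∈ R, ∀ b ∈ I, a * b ∈ I ∧ b * a ∈ I)) := by
  subst hR hI
  -- basic facts about σ
  have hσ1 : σ 1 = 1 := by
    have h := hσmul (σ 1) 1
    simpa [hσinv] using h.symm
  have hσ0 : σ 0 = 0 := by
    have h : σ 0 = σ 0 + σ 0 := by simpa using (hσadd 0 0)
    exact left_eq_add.mp h
  have hσneg : ∀ a, σ (-a) = - σ a := by
    intro a
    have h := hσadd a (-a)
    rw [add_neg_cancel, hσ0] at h
    exact eq_neg_of_add_eq_zero_right h.symm
  -- scalar multiplication by elements of P preserves Pc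
  have hsm : ∀ u ∈ P, ∀ a ∈ Pc, u • a ∈ Pc := by
    intro u hu
    have : u ∈ {u : F | ∀ a ∈ Pc, u • a ∈ Pc} := by rw [hPcF]; exact hu
    exact this
  have h1P : (1 : F) ∈ P := by
    rw [← hPcF]; intro a ha; simpa using ha
  have hsqP : ∀ x : F, x * x ∈ P := by
    intro x
    rcases hPtot x with hx | hx
    · exact hPmul x hx x hx
    · simpa using hPmul (-x) hx (-x) hx
  have hinvP : ∀ u ∈ P, u⁻¹ ∈ P := by
    intro u hu
    rcases eq_or_ne u 0 with rfl | hne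
    · simpa using hP0
    · have : u⁻¹ = u⁻¹ * u⁻¹ * u := by field_simp
      rw [this]
      exact hPmul _ (hsqP u⁻¹) _ hu
  have h2P : (2 : F) ∈ P := by
    have := hPadd 1 h1P 1 h1P; norm_num at this; exact this
  have h1ne : (1 : F) ≠ 0 := one_ne_zero
  have h2ne : (2 : F) ≠ 0 := by
    intro h
    have hm1 : (-1 : F) ∈ P := by
      have : (-1 : F) = 1 - 2 := by ring
      rw [this, h]; simpa using h1P
    exact h1ne (hPprop 1 h1P hm1)
  have h4P : (4 : F) ∈ P := by
    have := hPmul 2 h2P 2 h2P; norm_num at this; exact this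
  have h4ne : (4 : F) ≠ 0 := by
    intro h
    have : (2 : F) * 2 = 0 := by rw [← h]; norm_num
    exact h2ne (by rcases mul_eq_zero.mp this with h' | h' <;> exact h')
  -- `σ a * a ∈ Pc` always
  have hsq : ∀ a : A, σ a * a ∈ Pc := by
    intro a
    simpa using hPcconj a 1 hone
  -- algebraMap of P elements lies in Pc
  have halg : ∀ m ∈ P, algebraMap F A m ∈ Pc := by
    intro m hm
    rw [Algebra.algebraMap_eq_smul_one]
    exact hsm m hm 1 hone
  -- m + 1 ≠ 0 for m ∈ P
  have hsucc : ∀ m ∈ P, m + 1 ≠ 0 := by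
    intro m hm h
    have hm1 : -m = 1 := by linear_combination -h
    have hz : m = 0 := hPprop m hm (by rw [hm1]; exact h1P)
    rw [hz] at hm1
    norm_num at hm1
  -- key multiplicative bound
  have hmul : ∀ (a b : A) (m n : F), m ∈ P →
      algebraMap F A m - σ a * a ∈ Pc → algebraMap F A n - σ b * b ∈ Pc →
      algebraMap F A (m * n) - σ (a * b) * (a * b) ∈ Pc := by
    intro a b m n hm ha hb
    have h1 : m • (algebraMap F A n - σ b * b) ∈ Pc := hsm m hm _ hb
    have h2 : σ b * (algebraMap F A m - σ a * a) * b ∈ Pc := hPcconj b _ ha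
    have h := hPcadd _ h1 _ h2
    convert h using 1
    rw [hσmul, Algebra.smul_def, map_mul, mul_sub, mul_sub, sub_mul,
      ← Algebra.commutes m (σ b)]
    noncomm_ring
  -- key additive bound
  have haddb : ∀ (a b : A) (m n : F),
      algebraMap F A m - σ a * a ∈ Pc → algebraMap F A n - σ b * b ∈ Pc →
      algebraMap F A (2 * (m + n)) - σ (a + b) * (a + b) ∈ Pc := by
    intro a b m n ha hb
    have h3 : σ (a - b) * (a - b) ∈ Pc := hsq _
    have h := hPcadd _ (hPcadd _ (hPcadd _ ha _ hb) _ (hPcadd _ ha _ hb)) _ h3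
    convert h using 1
    rw [hσadd, sub_eq_add_neg a b, hσadd, hσneg]
    rw [show (2 : F) * (m + n) = (m + n) + (m + n) by ring, map_add, map_add]
    noncomm_ring
  refine ⟨⟨?_, ?_, ?_, ?_⟩, ?_, ?_, ?_, ?_, ?_⟩
  · -- 1 ∈ R
    exact ⟨1, k.one_mem, h1P, by simpa [hσ1] using hPc0⟩
  · -- R closed under addition
    rintro a ⟨m, hmk, hmP, hma⟩ b ⟨n, hnk, hnP, hnb⟩
    exact ⟨2 * (m + n), k.mul_mem (by
        rw [show (2:F) = 1 + 1 by norm_num]; exact k.add_mem k.one_mem k.one_mem) (k.add_mem hmk hnk),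
      hPmul 2 h2P _ (hPadd m hmP n hnP), haddb a b m n hma hnb⟩
  · -- R closed under negation
    rintro a ⟨m, hmk, hmP, hma⟩
    exact ⟨m, hmk, hmP, by rw [hσneg]; simpa using hma⟩
  · -- R closed under multiplication
    rintro a ⟨m, hmk, hmP, hma⟩ b ⟨n, hnk, hnP, hnb⟩
    exact ⟨m * n, k.mul_mem hmk hnk, hPmul m hmP n hnP, hmul a b m n hmP hma hnb⟩
  · -- I ⊆ R
    intro a ha
    exact ⟨1, k.one_mem, h1P, ha 1 k.one_mem h1P h1ne⟩
  · -- 0 ∈ I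
    intro ε hεk hεP hεne
    simpa using halg ε hεP
  · -- I closed under addition
    intro a ha b hb ε hεk hεP hεne
    set δ := ε / 4 with hδ
    have hδk : δ ∈ k := k.div_mem hεk (by
      rw [show (4:F) = 1 + 1 + 1 + 1 by norm_num]
      exact k.add_mem (k.add_mem (k.add_mem k.one_mem k.one_mem) k.one_mem) k.one_mem)
    have hδP : δ ∈ P := by rw [hδ, div_eq_mul_inv]; exact hPmul ε hεP _ (hinvP 4 h4P)
    have hδne : δ ≠ 0 := div_ne_zero hεne h4ne
    have ha' := ha δ hδk hδP hδne
    have hb' := hb δ hδk hδP hδne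
    have h := haddb a b δ δ ha' hb'
    have hE : (2 : F) * (δ + δ) = ε := by rw [hδ, show (2 : F) * (ε / 4 + ε / 4) = ε / 4 * 4 by ring]; field_simp
    rwa [hE] at h
  · -- I closed under negation
    intro a ha ε hεk hεP hεne
    rw [hσneg]
    simpa using ha ε hεk hεP hεne
  · -- I absorbs multiplication by R
    rintro a ⟨m, hmk, hmP, hma⟩ b hb
    have hm1P : m + 1 ∈ P := hPadd m hmP 1 h1P
    have hm1ne : m + 1 ≠ 0 := hsucc m hmP
    have hm1k : m + 1 ∈ k := k.add_mem hmk k.one_mem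
    have hma' : algebraMap F A (m + 1) - σ a * a ∈ Pc := by
      have := hPcadd _ hma _ hone
      rw [map_add, map_one]
      convert this using 1
      abel
    constructor
    · intro ε hεk hεP hεne
      set δ := ε / (m + 1) with hδ
      have hδk : δ ∈ k := k.div_mem hεk hm1k
      have hδP : δ ∈ P := by rw [hδ, div_eq_mul_inv]; exact hPmul ε hεP _ (hinvP _ hm1P)
      have hδne : δ ≠ 0 := div_ne_zero hεne hm1ne
      have hb' := hb δ hδk hδP hδne
      have h := hmul a b (m + 1) δ hm1P hma' hb'
      have hE : (m + 1) * δ = ε := by rw [hδ]; field_simp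
      rwa [hE] at h
    · intro ε hεk hεP hεne
      set δ := ε / (m + 1) with hδ
      have hδk : δ ∈ k := k.div_mem hεk hm1k
      have hδP : δ ∈ P := by rw [hδ, div_eq_mul_inv]; exact hPmul ε hεP _ (hinvP _ hm1P)
      have hδne : δ ≠ 0 := div_ne_zero hεne hm1ne
      have hb' := hb δ hδk hδP hδne
      have h := hmul b a δ (m + 1) hδP hb' hma'
      have hE : δ * (m + 1) = ε := by rw [hδ]; field_simp
      rwa [hE] at h
end

section
/- Let (A,σ) be an F-algebra with involution, w a σ-invariant v-gauge on A, and 𝒫 a positive cone on (A,σ) over P ∈ X_F with 1 ∈ 𝒫. If condition (C5) holds — namely π_w(𝒫 ∩ R_w) is a prepositive cone on the residue algebra (A₀, σ₀) — then condition (C4) holds: I_w is 𝒫-convex in R_w, i.e., for all a ∈ R_w and b ∈ I_w with 0 ≤_𝒫 a ≤_𝒫 b, we have a ∈ I_w. -/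
/-- An ordering on a field (containing `0` by convention). -/
def IsOrderingSet {F : Type*} [Field F] (P : Set F) : Prop :=
  (0 : F) ∈ P ∧ (∀ a ∈ P, ∀ b ∈ P, a + b ∈ P) ∧ (∀ a ∈ P, ∀ b ∈ P, a * b ∈ P) ∧
  (∀ a : F, a ∈ P ∨ -a ∈ P) ∧ (∀ a : F, a ∈ P → -a ∈ P → a = 0)

/-- Let `(A,σ)` be an `F`-algebra with involution, `w` a `σ`-invariant
`v`-gauge on `A`, and `Pc` a positive cone on `(A,σ)` over `P` with `1 ∈ Pc`.  If condition
(C5) holds — `π_w(Pc ∩ R_w)` is a prepositive cone on the residue algebra `(A₀,σ₀)`, encoded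
here on representatives, with `R_w = {a : w a ≥ 0}`, `I_w = {a : w a > 0}` and `π_w x = π_w y`
iff `w (x - y) > 0` — then (C4) holds: `I_w` is `Pc`-convex in `R_w`. -/
theorem stmt_10
    {F A : Type*} [Field F] [Ring A] [Algebra F A]
    {Γ : Type*} [AddCommGroup Γ] [LinearOrder Γ] [IsOrderedAddMonoid Γ]
    (σ : A → A)
    (hσadd : ∀ x y, σ (x + y) = σ x + σ y)
    (hσmul : ∀ x y, σ (x * y) = σ y * σ x)
    (hσinv : ∀ x, σ (σ x) = x)
    (hσlin : ∀ (r : F) (x : A), σ (r • x) = r • σ x)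
    -- `v` is a valuation on `F`:
    (v : F → WithTop Γ)
    (hv0 : ∀ x, v x = ⊤ ↔ x = 0)
    (hvmul : ∀ x y, v (x * y) = v x + v y)
    (hvadd : ∀ x y, min (v x) (v y) ≤ v (x + y))
    -- `w` is a surmultiplicative `v`-value function on `A`:
    (w : A → WithTop Γ)
    (hw0 : ∀ x, w x = ⊤ ↔ x = 0)
    (hwadd : ∀ x y, min (w x) (w y) ≤ w (x + y))
    (hwsmul : ∀ (r : F) (x : A), w (r • x) = v r + w x)
    (hwone : w 1 = 0)
    (hwmul : ∀ x y, w x + w y ≤ w (x * y))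
    -- `w` is `σ`-invariant:
    (hwσ : ∀ x, w (σ x) = w x)
    -- `w` is a `v`-norm (it admits a splitting basis):
    (hwnorm : ∃ (m : ℕ) (e : Fin m → A),
      (∀ a : A, ∃ lam : Fin m → F, a = ∑ i, lam i • e i) ∧
      (∀ lam : Fin m → F,
        w (∑ i, lam i • e i) = Finset.univ.inf fun i => v (lam i) + w (e i)))
    -- the associated graded ring `gr_w(A)` is semisimple (no nonzero homogeneous nilpotent
    -- two-sided ideal, encoded componentwise):
    (hgrss : ∀ I : Γ → AddSubgroup A,
      (∀ γ : Γ, ∀ x ∈ I γ, (↑γ : WithTop Γ) ≤ w x) →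
      (∀ γ : Γ, ∀ x : A, (↑γ : WithTop Γ) < w x → x ∈ I γ) →
      (∀ (α β : Γ) (x y : A), (↑α : WithTop Γ) ≤ w x → y ∈ I β →
        x * y ∈ I (α + β) ∧ y * x ∈ I (β + α)) →
      (∃ m : ℕ, 0 < m ∧ ∀ (γ : Fin m → Γ) (y : Fin m → A),
        (∀ i, y i ∈ I (γ i)) → ((∑ i, γ i : Γ) : WithTop Γ) < w (List.ofFn y).prod) →
      ∀ γ : Γ, ∀ x ∈ I γ, (↑γ : WithTop Γ) < w x)
    -- `P` is an ordering on `F` and `Pc` a positive cone on `(A,σ)` over `P` with `1 ∈ Pc`: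
    (P : Set F) (hP : IsOrderingSet P)
    (Pc : Set A) (hPc : IsPrepositiveCone σ P Pc)
    (hPcmax : ∀ Q : Set A, Pc ⊆ Q →
      (∃ P' : Set F, IsOrderingSet P' ∧ IsPrepositiveCone σ P' Q) → Q = Pc)
    (hone : (1 : A) ∈ Pc)
    -- (C5): `π_w(Pc ∩ R_w)` is a prepositive cone on `(A₀, σ₀)`, on representatives:
    -- (P2) closed under sums:
    (hC5add : ∀ a, a ∈ Pc → 0 ≤ w a → ∀ b, b ∈ Pc → 0 ≤ w b →
      ∃ c, c ∈ Pc ∧ 0 ≤ w c ∧ 0 < w (a + b - c))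
    -- (P3) closed under `ξ ↦ σ₀(ξ) · ξ`-congruence:
    (hC5conj : ∀ x : A, 0 ≤ w x → ∀ a, a ∈ Pc → 0 ≤ w a →
      ∃ c, c ∈ Pc ∧ 0 ≤ w c ∧ 0 < w (σ x * a * x - c))
    -- (P4) the associated subset of the residue field is an ordering; here
    -- `Q := {u ∈ R_v : π_v(u)` multiplies `π_w(Pc ∩ R_w)` into itself`}`:
    (hC5ord : ∀ Q : Set F, Q = {u : F | 0 ≤ v u ∧ ∀ a, a ∈ Pc → 0 ≤ w a →
        ∃ c, c ∈ Pc ∧ 0 ≤ w c ∧ 0 < w (algebraMap F A u * a - c)} →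
      (∀ u ∈ Q, ∀ u' ∈ Q, u + u' ∈ Q) ∧
      (∀ u ∈ Q, ∀ u' ∈ Q, u * u' ∈ Q) ∧
      (∀ u : F, 0 ≤ v u → u ∈ Q ∨ -u ∈ Q) ∧
      (∀ u : F, u ∈ Q → -u ∈ Q → 0 < v u))
    -- (P5) properness:
    (hC5prop : ∀ a, a ∈ Pc → 0 ≤ w a → ∀ b, b ∈ Pc → 0 ≤ w b →
      0 < w (a + b) → 0 < w a) :
    -- then (C4): `I_w` is `Pc`-convex in `R_w`:
    ∀ s₁ s₂ t : A, 0 < w s₁ → 0 < w s₂ → 0 ≤ w t →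
      t - s₁ ∈ Pc → s₂ - t ∈ Pc → 0 < w t := by
  intro s₁ s₂ t hs₁ hs₂ ht ha hb
  -- `v 1 = 0`
  have hv1 : v 1 = 0 := by
    have h := hvmul 1 1
    rw [one_mul] at h
    rcases eq_or_ne (v 1) ⊤ with h1 | h1
    · exact absurd ((hv0 1).1 h1) one_ne_zero
    · obtain ⟨γ, hγ⟩ := WithTop.ne_top_iff_exists.1 h1
      rw [← hγ, ← WithTop.coe_add, WithTop.coe_inj, left_eq_add] at h
      rw [← hγ, h, WithTop.coe_zero]
  -- `v (-1) = 0`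
  have hvneg1 : v (-1) = 0 := by
    have h := hvmul (-1) (-1)
    rw [neg_one_mul, neg_neg, hv1] at h
    rcases eq_or_ne (v (-1)) ⊤ with h1 | h1
    · rw [h1, top_add] at h; simp at h
    · obtain ⟨γ, hγ⟩ := WithTop.ne_top_iff_exists.1 h1
      rw [← hγ, ← WithTop.coe_add, eq_comm, WithTop.coe_eq_zero] at h
      have hγ0 : γ = 0 := by
        rcases lt_trichotomy γ 0 with hlt | he | hgt
        · exact absurd h (add_neg hlt hlt).ne
        · exact he
        · exact absurd h (add_pos hgt hgt).ne'
      rw [← hγ, hγ0, WithTop.coe_zero]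
  have hwneg : ∀ x : A, w (-x) = w x := fun x => by
    rw [← neg_one_smul F x, hwsmul, hvneg1, zero_add]
  have hsub : ∀ x y : A, min (w x) (w y) ≤ w (x - y) := fun x y => by
    have h := hwadd x (-y)
    rw [hwneg, ← sub_eq_add_neg] at h
    exact h
  have hwa : 0 ≤ w (t - s₁) := le_trans (le_min ht hs₁.le) (hsub t s₁)
  have hwb : 0 ≤ w (s₂ - t) := le_trans (le_min hs₂.le ht) (hsub s₂ t)
  have hab : 0 < w ((t - s₁) + (s₂ - t)) := by
    have he : (t - s₁) + (s₂ - t) = s₂ - s₁ := by abel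
    rw [he]
    exact lt_of_lt_of_le (lt_min hs₂ hs₁) (hsub s₂ s₁)
  have hkey : 0 < w (t - s₁) := hC5prop _ ha hwa _ hb hwb hab
  have he : t = (t - s₁) + s₁ := by abel
  rw [he]
  exact lt_of_lt_of_le (lt_min hkey hs₁) (hwadd _ _)
end

section
/- Let R be a semisimple ring with involution τ, M a right R-module, and h: M × M → R a nonsingular hermitian form over (R,τ) with adjoint involution ad_h on End_R(M). Then h is anisotropic (h(x,x) = 0 implies x = 0) if and only if ad_h is anisotropic (ad_h(f)∘f = 0 implies f = 0). -/
/-- Let `R` be a semisimple ring with involution `τ`, `M` a right `R`-module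
and `h : M × M → R` a nonsingular hermitian form over `(R,τ)` with adjoint involution `ad_h` on
`End_R(M)`.  Then `h` is anisotropic iff `ad_h` is anisotropic.  (Right `R`-modules are encoded
as left `Rᵐᵒᵖ`-modules, `x·r := (op r) • x`.) -/
theorem stmt_12
    {R M : Type*} [Ring R] [IsSemisimpleRing R]
    [AddCommGroup M] [Module Rᵐᵒᵖ M]
    -- `τ` is an involution on `R`:
    (τ : R → R)
    (hτadd : ∀ x y, τ (x + y) = τ x + τ y)
    (hτmul : ∀ x y, τ (x * y) = τ y * τ x)
    (hτinv : ∀ x, τ (τ x) = x)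
    -- `h` is a hermitian form over `(R,τ)`:
    (h : M → M → R)
    (haddl : ∀ x y z, h (x + y) z = h x z + h y z)
    (haddr : ∀ x y z, h x (y + z) = h x y + h x z)
    (hsml : ∀ (r : R) (x y : M), h ((MulOpposite.op r) • x) y = τ r * h x y)
    (hsmr : ∀ (r : R) (x y : M), h x ((MulOpposite.op r) • y) = h x y * r)
    (hherm : ∀ x y, h x y = τ (h y x))
    -- `h` is nonsingular: the induced map `M → Hom_R(M,R)` is bijective:
    (hinj : ∀ x : M, (∀ y, h x y = 0) → x = 0)
    (hsurj : ∀ f : M → R, (∀ y z, f (y + z) = f y + f z) →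
      (∀ (r : R) (y : M), f ((MulOpposite.op r) • y) = f y * r) → ∃ x, ∀ y, h x y = f y)
    -- `ad_h` is the adjoint involution on `End_R(M)`:
    (adh : (M →ₗ[Rᵐᵒᵖ] M) → (M →ₗ[Rᵐᵒᵖ] M))
    (hadh : ∀ (f : M →ₗ[Rᵐᵒᵖ] M) (x y : M), h (adh f x) y = h x (f y)) :
    (∀ x : M, h x x = 0 → x = 0) ↔
      (∀ f : M →ₗ[Rᵐᵒᵖ] M, (adh f) ∘ₗ f = 0 → f = 0) := by
  have hzero : ∀ z : M, h 0 z = 0 := by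
    intro z
    have := haddl 0 0 z
    rw [add_zero] at this
    exact left_eq_add.mp this
  constructor
  · -- h anisotropic → adh anisotropic
    intro han f hf
    ext y
    simp only [LinearMap.zero_apply]
    apply han
    have h1 : h (adh f (f y)) y = h (f y) (f y) := hadh f (f y) y
    have h2 : adh f (f y) = 0 := by
      have := congrFun (congrArg DFunLike.coe hf) y
      simpa using this
    rw [h2, hzero] at h1
    exact h1.symm
  · -- adh anisotropic → h anisotropic
    intro han x hx
    -- transport semisimplicity to Rᵐᵒᵖ via τ
    have hτbij : Function.Bijective τ :=
      Function.bijective_iff_has_inverse.mpr ⟨τ, hτinv, hτinv⟩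
    let e : R ≃+* Rᵐᵒᵖ :=
      { toFun := fun r => MulOpposite.op (τ r)
        invFun := fun r => τ r.unop
        left_inv := fun r => by simp [hτinv]
        right_inv := fun r => by simp [hτinv]
        map_mul' := fun a b => by simp [hτmul]
        map_add' := fun a b => by simp [hτadd] }
    haveI : IsSemisimpleRing Rᵐᵒᵖ := e.isSemisimpleRing
    set N : Submodule Rᵐᵒᵖ M := Submodule.span Rᵐᵒᵖ {x} with hN
    obtain ⟨N', hc⟩ := exists_isCompl N
    let f : M →ₗ[Rᵐᵒᵖ] M := N.subtype ∘ₗ N.projectionOnto N' hc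
    have hfmem : ∀ y : M, f y ∈ N := fun y => (N.projectionOnto N' hc y).2
    have hxN : x ∈ N := Submodule.mem_span_singleton_self x
    have hfx : f x = x := by
      have := Submodule.linearProjOfIsCompl_apply_left hc ⟨x, hxN⟩
      simp only [f, LinearMap.comp_apply, Submodule.subtype_apply]
      rw [this]
    have hNN : ∀ a b : M, a ∈ N → b ∈ N → h a b = 0 := by
      intro a b ha hb
      rw [hN] at ha hb
      obtain ⟨r, hr⟩ := Submodule.mem_span_singleton.mp ha
      obtain ⟨s, hs⟩ := Submodule.mem_span_singleton.mp hb
      rw [← hr, ← hs, ← MulOpposite.op_unop r, ← MulOpposite.op_unop s,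
        hsml, hsmr, hx, zero_mul, mul_zero]
    have hcomp : (adh f) ∘ₗ f = 0 := by
      ext y
      simp only [LinearMap.comp_apply, LinearMap.zero_apply]
      apply hinj
      intro z
      rw [hadh f (f y) z]
      exact hNN _ _ (hfmem y) (hfmem z)
    have hf0 := han f hcomp
    have := congrFun (congrArg DFunLike.coe hf0) x
    simpa [hfx] using this
end

section
/- Let R be a semisimple ring with involution τ, let s₁, …, s_n be invertible τ-symmetric elements of R, and S = diag(s₁,…,s_n) ∈ M_n(R). Then for any r ∈ ℕ, the involution Int(S)∘τ^t on M_n(R) is r-anisotropic (i.e., the involution (Int(S)∘τ^t)^t on M_r(M_n(R)) is anisotropic) if and only if the hermitian form ⟨s₁,…,s_n⟩_τ is r-anisotropic (i.e., r×⟨s₁,…,s_n⟩_τ is anisotropic). -/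
/-- Let `R` be a semisimple ring with involution `τ`, `s₁,…,s_n` invertible
`τ`-symmetric elements of `R` and `S = diag(s₁,…,s_n)`.  For any `r : ℕ`, the involution
`Int(S)∘τ^t` on `M_n(R)` is `r`-anisotropic (i.e. `(Int(S)∘τ^t)^t` on `M_r(M_n(R))` is
anisotropic) iff the hermitian form `⟨s₁,…,s_n⟩_τ` is `r`-anisotropic. -/
theorem stmt_14
    {R : Type*} [Ring R] [IsSemisimpleRing R]
    -- `τ` is an involution on `R`:
    (τ : R → R)
    (hτadd : ∀ x y, τ (x + y) = τ x + τ y)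
    (hτmul : ∀ x y, τ (x * y) = τ y * τ x)
    (hτinv : ∀ x, τ (τ x) = x)
    -- `s i` invertible and `τ`-symmetric, with inverses `t i`:
    (n : ℕ) (s t : Fin n → R)
    (hst : ∀ i, s i * t i = 1 ∧ t i * s i = 1)
    (hsym : ∀ i, τ (s i) = s i)
    -- `θ = Int(S) ∘ τ^t` on `M_n(R)`:
    (θ : Matrix (Fin n) (Fin n) R → Matrix (Fin n) (Fin n) R)
    (hθ : ∀ a, θ a = Matrix.diagonal s * (Matrix.of fun i j => τ (a j i)) * Matrix.diagonal t)
    (r : ℕ) :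
    -- `Int(S)∘τ^t` is `r`-anisotropic
    (∀ X : Matrix (Fin r) (Fin r) (Matrix (Fin n) (Fin n) R),
        (Matrix.of fun i j => θ (X j i)) * X = 0 → X = 0) ↔
    -- iff `r × ⟨s₁,…,s_n⟩_τ` is anisotropic
    (∀ x : Fin r → Fin n → R, (∑ k, ∑ i, τ (x k i) * (s i * x k i)) = 0 → x = 0) := by
  have hτ1 : τ 1 = 1 := by
    have h := hτmul (τ 1) 1
    rw [mul_one, hτinv] at h
    simpa using h.symm
  have hts : ∀ i, τ (t i) * s i = 1 := by
    intro i
    have h := hτmul (s i) (t i)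
    rw [(hst i).1, hτ1, hsym] at h
    exact h.symm
  have hτt : ∀ i, τ (t i) = t i := by
    intro i
    calc τ (t i) = τ (t i) * (s i * t i) := by rw [(hst i).1, mul_one]
      _ = (τ (t i) * s i) * t i := by rw [mul_assoc]
      _ = t i := by rw [hts i, one_mul]
  -- entrywise formula for θ
  have hθe : ∀ (a : Matrix (Fin n) (Fin n) R) (i p : Fin n),
      θ a i p = s i * (τ (a p i) * t p) := by
    intro a i p
    simp [hθ, Matrix.mul_diagonal, Matrix.diagonal_mul, mul_assoc]
  -- entrywise formula for the product in the statement
  have hPe : ∀ (X : Matrix (Fin r) (Fin r) (Matrix (Fin n) (Fin n) R)) (k l : Fin r)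
      (i j : Fin n),
      ((Matrix.of fun i j => θ (X j i)) * X) k l i j
        = ∑ m, ∑ p, s i * (τ (X m k p i) * t p) * X m l p j := by
    intro X k l i j
    rw [Matrix.mul_apply, Matrix.sum_apply]
    refine Finset.sum_congr rfl fun m _ => ?_
    rw [Matrix.mul_apply]
    refine Finset.sum_congr rfl fun p _ => ?_
    rw [Matrix.of_apply, hθe]
  constructor
  · -- matrix-level anisotropy ⇒ form anisotropy
    intro h x hx
    set X : Matrix (Fin r) (Fin r) (Matrix (Fin n) (Fin n) R) :=
      fun m _ => Matrix.of fun p _ => s p * x m p with hXdef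
    have hX : (Matrix.of fun i j => θ (X j i)) * X = 0 := by
      ext k l i j
      simp only [Matrix.zero_apply]
      rw [hPe]
      have key : ∀ (m : Fin r) (p : Fin n),
          s i * (τ (X m k p i) * t p) * X m l p j
            = s i * (τ (x m p) * (s p * x m p)) := by
        intro m p
        show s i * (τ (s p * x m p) * t p) * (s p * x m p) = _
        rw [hτmul, hsym, mul_assoc (τ (x m p)), (hst p).1, mul_one, mul_assoc]
      calc (∑ m, ∑ p, s i * (τ (X m k p i) * t p) * X m l p j)
          = ∑ m, ∑ p, s i * (τ (x m p) * (s p * x m p)) :=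
            Finset.sum_congr rfl fun m _ => Finset.sum_congr rfl fun p _ => key m p
        _ = s i * ∑ m, ∑ p, τ (x m p) * (s p * x m p) := by
            rw [Finset.mul_sum]
            exact Finset.sum_congr rfl fun m _ => (Finset.mul_sum _ _ _).symm
        _ = 0 := by rw [hx, mul_zero]
    have hX0 := h X hX
    funext m p
    have h1 : s p * x m p = 0 := by
      have h0 := congrFun (congrFun (congrFun (congrFun hX0 m) m) p) p
      simpa [hXdef] using h0
    show x m p = 0
    calc x m p = t p * (s p * x m p) := by rw [← mul_assoc, (hst p).2, one_mul]
      _ = 0 := by rw [h1, mul_zero]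
  · -- form anisotropy ⇒ matrix-level anisotropy
    intro h X hX
    ext m k p i
    simp only [Matrix.zero_apply]
    have hE : (∑ a, ∑ b, τ (t b * X a k b i) * (s b * (t b * X a k b i))) = 0 := by
      have h0 : ((Matrix.of fun i j => θ (X j i)) * X) k k i i = 0 := by
        rw [hX]; simp
      rw [hPe] at h0
      have key : ∀ (a : Fin r) (b : Fin n),
          τ (t b * X a k b i) * (s b * (t b * X a k b i))
            = t i * (s i * (τ (X a k b i) * t b) * X a k b i) := by
        intro a b
        have hsby : s b * (t b * X a k b i) = X a k b i := by
          rw [← mul_assoc, (hst b).1, one_mul]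
        rw [hsby, hτmul, hτt, ← mul_assoc (t i), ← mul_assoc (t i), (hst i).2, one_mul]
      calc (∑ a, ∑ b, τ (t b * X a k b i) * (s b * (t b * X a k b i)))
          = ∑ a, ∑ b, t i * (s i * (τ (X a k b i) * t b) * X a k b i) :=
            Finset.sum_congr rfl fun a _ => Finset.sum_congr rfl fun b _ => key a b
        _ = t i * ∑ a, ∑ b, s i * (τ (X a k b i) * t b) * X a k b i := by
            rw [Finset.mul_sum]
            exact Finset.sum_congr rfl fun a _ => (Finset.mul_sum _ _ _).symm
        _ = 0 := by rw [h0, mul_zero]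
    have hy0 := h (fun a b => t b * X a k b i) (by simpa using hE)
    have h1 : t p * X m k p i = 0 := by
      have := congrFun (congrFun hy0 m) p
      simpa using this
    calc X m k p i = s p * (t p * X m k p i) := by rw [← mul_assoc, (hst p).1, one_mul]
      _ = 0 := by rw [h1, mul_zero]
end
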